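/- Let G be a directed graph with finitely many vertices and no cycles (i.e., there is no nonempty directed path from any vertex to itself). Then the geometric realization of the nerve of the poset C(G) of proper labellings of G is a contractible topological space. -/

import Mathlib

open CategoryTheory


/-- The three labels `A`, `B`, `C`. -/
inductive Label : Type
  | A | B | C
  deriving DecidableEq

/-- A labelling `ℓ` of the directed graph with vertex set `V` and edge relation `E`
is proper if for every edge `(v, w)`, either `ℓ v = A` or `ℓ w = B`. -/
def IsProper {V : Type} (E : V → V → Prop) (ℓ : V → Label) : Prop :=
  ∀ v w, E v w → ℓ v = Label.A ∨ ℓ w = Label.B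

/-- The proper labellings of the directed graph `(V, E)`. -/
def ProperLabelling (V : Type) (E : V → V → Prop) : Type :=
  { ℓ : V → Label // IsProper E ℓ }

/-- The poset `C(G)` of proper labellings: `ℓ ≤ ℓ'` iff at every vertex the labels agree,
or the label changes from `A` or `B` to `C`. -/
instance (V : Type) (E : V → V → Prop) : PartialOrder (ProperLabelling V E) where
  le ℓ ℓ' := ∀ v, ℓ.1 v = ℓ'.1 v ∨ (ℓ.1 v ≠ Label.C ∧ ℓ'.1 v = Label.C)
  le_refl ℓ v := Or.inl rfl
  le_trans a b c hab hbc v := by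
    rcases hab v with h | ⟨h1, h2⟩
    · rcases hbc v with h' | ⟨h1', h2'⟩
      · exact Or.inl (h.trans h')
      · exact Or.inr ⟨by rw [h]; exact h1', h2'⟩
    · rcases hbc v with h' | ⟨h1', h2'⟩
      · exact Or.inr ⟨h1, h'.symm.trans h2⟩
      · exact Or.inr ⟨h1, h2'⟩
  le_antisymm a b hab hba := by
    apply Subtype.ext
    funext v
    rcases hab v with h | ⟨h1, h2⟩
    · exact h
    · rcases hba v with h' | ⟨h1', h2'⟩
      · exact h'.symm
      · exact absurd h2' h1


/-- `Label` is a finite type. -/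
instance : Finite Label :=
  Finite.of_injective (fun l => match l with
    | Label.A => (0 : Fin 3) | Label.B => 1 | Label.C => 2) (by
    intro a b h
    cases a <;> cases b <;> first | rfl | exact absurd h (by decide))

namespace NerveContract

attribute [local instance] Classical.propDecidable

variable {P Q : Type} [PartialOrder P] [PartialOrder Q]

lemma functor_ext {C D : Type} [Preorder C] [Preorder D] (F G : C ⥤ D)
    (h : ∀ i, F.obj i = G.obj i) : F = G :=
  CategoryTheory.Functor.ext h (fun _ _ f => Subsingleton.elim _ _)

/-- The chain (simplex of the nerve) associated to a monotone map. -/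
def mkChain {n : ℕ} {c : Fin (n + 1) → P} (hc : Monotone c) : ComposableArrows P n :=
  hc.functor

@[simp] lemma mkChain_obj {n : ℕ} {c : Fin (n + 1) → P} (hc : Monotone c) (i : Fin (n+1)) :
    (mkChain hc).obj i = c i := rfl

lemma chain_monotone {n : ℕ} (F : ComposableArrows P n) :
    Monotone F.obj := fun i j hij => leOfHom (F.map (homOfLE hij))

lemma nerve_map_obj {m n : SimplexCategory} (φ : m ⟶ n) (F : (nerve P).obj (Opposite.op n))
    (i : Fin (m.len + 1)) :
    ((nerve P).map φ.op F).obj i = F.obj (φ.toOrderHom i) := by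
  rfl

/-- The map of nerves induced by a monotone map. -/
def nerveMap (f : P →o Q) : nerve P ⟶ nerve Q :=
  CategoryTheory.nerveMap f.monotone.functor

@[simp] lemma nerveMap_app_obj (f : P →o Q) {Δ : SimplexCategoryᵒᵖ} (F : (nerve P).obj Δ)
    (i : Fin (Δ.unop.len + 1)) :
    (((nerveMap f).app Δ F : (nerve Q).obj Δ)).obj i = f (F.obj i) := rfl

/-- The characteristic map of a simplex of the nerve, in the geometric realization. -/
noncomputable def χ {Δ : SimplexCategoryᵒᵖ} (F : (nerve P).obj Δ) :
    SimplexCategory.toTop.obj Δ.unop ⟶ SSet.toTop.obj (nerve P) :=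
  ((sSetTopAdj.unit.app (nerve P)).app Δ F).down

lemma χ_natural {m n : SimplexCategory} (φ : m ⟶ n) (F : (nerve P).obj (Opposite.op n)) :
    χ ((nerve P).map φ.op F) = SimplexCategory.toTop.map φ ≫ χ F := by
  have h := ConcreteCategory.congr_hom ((sSetTopAdj.unit.app (nerve P)).naturality φ.op) F
  exact congrArg ULift.down h

lemma chi_comp {Y : TopCat} (g : SSet.toTop.obj (nerve P) ⟶ Y) {Δ : SimplexCategoryᵒᵖ}
    (F : (nerve P).obj Δ) :
    χ F ≫ g = ((sSetTopAdj.homEquiv _ _ g).app Δ F).down := by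
  rw [Adjunction.homEquiv_unit]
  rfl

lemma hom_ext_chi {Y : TopCat} (g1 g2 : SSet.toTop.obj (nerve P) ⟶ Y)
    (h : ∀ (Δ : SimplexCategoryᵒᵖ) (F : (nerve P).obj Δ), χ F ≫ g1 = χ F ≫ g2) : g1 = g2 := by
  apply (sSetTopAdj.homEquiv _ _).injective
  ext Δ F
  have h1 := chi_comp g1 F
  have h2 := chi_comp g2 F
  apply ULift.ext
  exact h1.symm.trans ((h Δ F).trans h2)

lemma chi_map (φ : nerve P ⟶ nerve Q) {Δ : SimplexCategoryᵒᵖ} (F : (nerve P).obj Δ) :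
    χ F ≫ SSet.toTop.map φ = χ (φ.app Δ F) := by
  rw [chi_comp, Adjunction.homEquiv_unit, sSetTopAdj.unit_naturality]
  rfl


section Core

variable (f g : P →o P) {n : ℕ} (c : Fin (n + 1) → P)

/-- `i` is a "moved" index. -/
def Mv (i : Fin (n + 1)) : Prop := f (c i) ≠ g (c i)

/-- The last moved index, or `Fin.last n` if there is none. -/
noncomputable def qI : Fin (n + 1) :=
  if h : (Finset.univ.filter (fun i => Mv f g c i)).Nonempty
  then (Finset.univ.filter (fun i => Mv f g c i)).max' h else Fin.last n

lemma le_qI {i : Fin (n + 1)} (hi : Mv f g c i) : i ≤ qI f g c := by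
  have hne : (Finset.univ.filter (fun i => Mv f g c i)).Nonempty :=
    ⟨i, by simp [hi]⟩
  rw [qI, dif_pos hne]
  exact Finset.le_max' _ i (by simp [hi])

lemma mv_qI (h : ∃ i, Mv f g c i) : Mv f g c (qI f g c) := by
  obtain ⟨i, hi⟩ := h
  have hne : (Finset.univ.filter (fun i => Mv f g c i)).Nonempty := ⟨i, by simp [hi]⟩
  rw [qI, dif_pos hne]
  have := (Finset.univ.filter (fun i => Mv f g c i)).max'_mem hne
  simpa using this

lemma qI_eq_last (h : ¬ ∃ i, Mv f g c i) : qI f g c = Fin.last n := by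
  rw [qI, dif_neg]
  rintro ⟨i, hi⟩
  exact h ⟨i, by simpa using hi⟩

variable (hc : Monotone c)
variable (hanti : ∀ x y : P, x ≤ y → f x ≠ g x → f y ≠ g y → x = y)

include hc hanti in
lemma mv_eq {i j : Fin (n + 1)} (hi : Mv f g c i) (hj : Mv f g c j) : c i = c j := by
  rcases le_total i j with h | h
  · exact hanti _ _ (hc h) hi hj
  · exact (hanti _ _ (hc h) hj hi).symm

include hc hanti in
lemma mv_sandwich {i j : Fin (n + 1)} (hi : Mv f g c i) (hij : i ≤ j)
    (hj : j ≤ qI f g c) : Mv f g c j := by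
  have hq : Mv f g c (qI f g c) := mv_qI f g c ⟨i, hi⟩
  have h1 : c i = c (qI f g c) := mv_eq f g c hc hanti hi hq
  have h2 : c j = c i := le_antisymm (h1 ▸ hc hj) (hc hij)
  rw [Mv, h2]; exact hi

/-- First structure map `[n] → [n+1]` : skip the slot `q+1`. -/
def phi0 (q : Fin (n + 1)) (i : Fin (n + 1)) : Fin (n + 2) :=
  if (i : ℕ) ≤ (q : ℕ) then ⟨i, by omega⟩ else ⟨(i : ℕ) + 1, by omega⟩

lemma phi0_monotone (q : Fin (n + 1)) : Monotone (phi0 (n := n) q) := by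
  intro i j hij
  have hij' : (i : ℕ) ≤ (j : ℕ) := hij
  simp only [phi0]
  split_ifs <;> exact Fin.mk_le_mk.mpr (by omega)

/-- Second structure map: moved indices go to the slot `q+1`. -/
noncomputable def psi1 (i : Fin (n + 1)) : Fin (n + 2) :=
  if Mv f g c i then ⟨(qI f g c : ℕ) + 1, by omega⟩ else phi0 (qI f g c) i

include hc hanti in
lemma psi1_monotone : Monotone (psi1 f g c) := by
  intro i j hij
  by_cases hi : Mv f g c i <;> by_cases hj : Mv f g c j <;>
    simp only [psi1, if_pos, if_neg, hi, hj, if_true, if_false]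
  · exact le_refl _
  · -- moved i, unmoved j : j > q
    have hjq : ¬ ((j : ℕ) ≤ (qI f g c : ℕ)) := by
      intro hle
      exact hj (mv_sandwich f g c hc hanti hi hij hle)
    rw [phi0, if_neg hjq]
    exact Fin.mk_le_mk.mpr (by omega)
  · -- unmoved i, moved j : i < j ≤ q
    have hjq : (j : ℕ) ≤ (qI f g c : ℕ) := le_qI f g c hj
    have hiq : (i : ℕ) ≤ (qI f g c : ℕ) := le_trans hij hjq
    rw [phi0, if_pos hiq]
    exact Fin.mk_le_mk.mpr (by omega)
  · exact phi0_monotone _ hij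

/-- The prism chain `[n+1] → P`. -/
noncomputable def Dch (k : Fin (n + 2)) : P :=
  if h : (k : ℕ) ≤ (qI f g c : ℕ) then f (c ⟨k, by omega⟩)
  else if (k : ℕ) = (qI f g c : ℕ) + 1 then g (c (qI f g c))
  else f (c ⟨(k : ℕ) - 1, by omega⟩)

lemma Dch_eval_le {k : Fin (n + 2)} (h : (k : ℕ) ≤ (qI f g c : ℕ)) :
    Dch f g c k = f (c ⟨(k : ℕ), by omega⟩) := dif_pos h

lemma Dch_eval_eq {k : Fin (n + 2)} (h : (k : ℕ) = (qI f g c : ℕ) + 1) :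
    Dch f g c k = g (c (qI f g c)) := by
  rw [Dch, dif_neg (by omega), if_pos h]

lemma Dch_eval_gt {k : Fin (n + 2)} (h1 : ¬ (k : ℕ) ≤ (qI f g c : ℕ))
    (h2 : (k : ℕ) ≠ (qI f g c : ℕ) + 1) :
    Dch f g c k = f (c ⟨(k : ℕ) - 1, by omega⟩) := by
  rw [Dch, dif_neg h1, if_neg h2]

lemma psi1_eval_pos {i : Fin (n + 1)} (h : Mv f g c i) :
    psi1 f g c i = ⟨(qI f g c : ℕ) + 1, by omega⟩ := if_pos h

lemma psi1_eval_neg {i : Fin (n + 1)} (h : ¬ Mv f g c i) :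
    psi1 f g c i = phi0 (qI f g c) i := if_neg h

lemma phi0_eval_le {q : Fin (n + 1)} {i : Fin (n + 1)} (h : (i : ℕ) ≤ (q : ℕ)) :
    phi0 q i = ⟨(i : ℕ), by omega⟩ := if_pos h

lemma phi0_eval_gt {q : Fin (n + 1)} {i : Fin (n + 1)} (h : ¬ (i : ℕ) ≤ (q : ℕ)) :
    phi0 q i = ⟨(i : ℕ) + 1, by omega⟩ := if_neg h

variable (hfg : ∀ x, f x ≤ g x)

include hc hanti hfg in
lemma Dch_monotone : Monotone (Dch f g c) := by
  intro k l hkl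
  have hkl' : (k : ℕ) ≤ (l : ℕ) := hkl
  set q := qI f g c with hq
  by_cases hk : (k : ℕ) ≤ (q : ℕ) <;> by_cases hl : (l : ℕ) ≤ (q : ℕ)
  · rw [Dch, dif_pos hk, Dch, dif_pos hl]
    exact f.monotone (hc (Fin.mk_le_mk.mpr (by omega)))
  · rw [Dch, dif_pos hk, Dch, dif_neg hl]
    by_cases hl2 : (l : ℕ) = (q : ℕ) + 1
    · rw [if_pos hl2]
      exact le_trans (f.monotone (hc (by rw [Fin.le_def]; simp; omega))) (hfg _)
    · rw [if_neg hl2]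
      exact f.monotone (hc (Fin.mk_le_mk.mpr (by omega)))
  · omega
  · rw [Dch, dif_neg hk, Dch, dif_neg hl]
    by_cases hk2 : (k : ℕ) = (q : ℕ) + 1
    · rw [if_pos hk2]
      by_cases hl2 : (l : ℕ) = (q : ℕ) + 1
      · rw [if_pos hl2]
      · rw [if_neg hl2]
        -- g (c q) ≤ f (c (l-1)) with l-1 > q, hence unmoved
        have hl1q : ¬ ((⟨(l : ℕ) - 1, by omega⟩ : Fin (n + 1)) ≤ q) := by
          rw [Fin.le_def]; simp; omega
        have hmv : ¬ Mv f g c ⟨(l : ℕ) - 1, by omega⟩ := fun hm => hl1q (le_qI f g c hm)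
        have heq : f (c ⟨(l : ℕ) - 1, by omega⟩) = g (c ⟨(l : ℕ) - 1, by omega⟩) :=
          not_not.mp hmv
        rw [heq]
        exact g.monotone (hc (by rw [Fin.le_def]; simp; omega))
    · rw [if_neg hk2]
      by_cases hl2 : (l : ℕ) = (q : ℕ) + 1
      · omega
      · rw [if_neg hl2]
        exact f.monotone (hc (Fin.mk_le_mk.mpr (by omega)))

lemma Dch_phi0 (i : Fin (n + 1)) : Dch f g c (phi0 (qI f g c) i) = f (c i) := by
  set q := qI f g c with hq
  by_cases hi : (i : ℕ) ≤ (q : ℕ)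
  · rw [phi0, if_pos hi, Dch]
    rw [dif_pos (by simpa using hi)]
  · rw [phi0, if_neg hi, Dch]
    rw [dif_neg (by simp; omega), if_neg (by simp; omega)]
    congr 1

include hc hanti in
lemma Dch_psi1 (i : Fin (n + 1)) : Dch f g c (psi1 f g c i) = g (c i) := by
  by_cases hi : Mv f g c i
  · rw [psi1, if_pos hi, Dch]
    rw [dif_neg (by simp), if_pos (by simp)]
    rw [mv_eq f g c hc hanti (mv_qI f g c ⟨i, hi⟩) hi]
  · rw [psi1, if_neg hi, Dch_phi0]
    exact not_not.mp hi

end Core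

section Psi

variable (f g : P →o P) {n m : ℕ} (c : Fin (n + 1) → P) (φ : Fin (m + 1) →o Fin (n + 1))
variable (hc : Monotone c)
variable (hanti : ∀ x y : P, x ≤ y → f x ≠ g x → f y ≠ g y → x = y)

/-- The connecting map `[m+1] → [n+1]` between the prisms. -/
noncomputable def PsiF (k : Fin (m + 2)) : Fin (n + 2) :=
  if h : (k : ℕ) ≤ (qI f g (c ∘ φ) : ℕ) then phi0 (qI f g c) (φ ⟨k, by omega⟩)
  else if (k : ℕ) = (qI f g (c ∘ φ) : ℕ) + 1 then
    (if ∃ i, Mv f g (c ∘ φ) i then ⟨(qI f g c : ℕ) + 1, by omega⟩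
      else phi0 (qI f g c) (φ (Fin.last m)))
  else phi0 (qI f g c) (φ ⟨(k : ℕ) - 1, by omega⟩)

lemma PsiF_eval_le {k : Fin (m + 2)} (h : (k : ℕ) ≤ (qI f g (c ∘ φ) : ℕ)) :
    PsiF f g c φ k = phi0 (qI f g c) (φ ⟨(k : ℕ), by omega⟩) := dif_pos h

lemma PsiF_eval_eq {k : Fin (m + 2)} (h : (k : ℕ) = (qI f g (c ∘ φ) : ℕ) + 1) :
    PsiF f g c φ k = (if ∃ i, Mv f g (c ∘ φ) i then ⟨(qI f g c : ℕ) + 1, by omega⟩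
      else phi0 (qI f g c) (φ (Fin.last m))) := by
  rw [PsiF, dif_neg (by omega), if_pos h]

lemma PsiF_eval_gt {k : Fin (m + 2)} (h1 : ¬ (k : ℕ) ≤ (qI f g (c ∘ φ) : ℕ))
    (h2 : (k : ℕ) ≠ (qI f g (c ∘ φ) : ℕ) + 1) :
    PsiF f g c φ k = phi0 (qI f g c) (φ ⟨(k : ℕ) - 1, by omega⟩) := by
  rw [PsiF, dif_neg h1, if_neg h2]

include hc hanti in
lemma gt_q_of_gt_q' (he : ∃ i, Mv f g (c ∘ φ) i) {j : Fin (m + 1)}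
    (hj : (qI f g (c ∘ φ) : ℕ) < (j : ℕ)) : (qI f g c : ℕ) < (φ j : ℕ) := by
  by_contra hle
  rw [Nat.not_lt] at hle
  have hq' : Mv f g (c ∘ φ) (qI f g (c ∘ φ)) := mv_qI f g (c ∘ φ) he
  have h1 : Mv f g c (φ (qI f g (c ∘ φ))) := hq'
  have h2 : φ (qI f g (c ∘ φ)) ≤ φ j := φ.monotone (by rw [Fin.le_def]; omega)
  have h3 : Mv f g c (φ j) :=
    mv_sandwich f g c hc hanti h1 h2 (by rw [Fin.le_def]; omega)
  have h4 : j ≤ qI f g (c ∘ φ) := le_qI f g (c ∘ φ) h3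
  rw [Fin.le_def] at h4; omega

lemma q'_eq_of_not_ex (he : ¬ ∃ i, Mv f g (c ∘ φ) i) : (qI f g (c ∘ φ) : ℕ) = m := by
  rw [qI_eq_last f g (c ∘ φ) he]; simp

include hc hanti in
lemma PsiF_monotone : Monotone (PsiF f g c φ) := by
  intro k l hkl
  have hkl' : (k : ℕ) ≤ (l : ℕ) := hkl
  have hq'm : (qI f g (c ∘ φ) : ℕ) ≤ m := by omega
  by_cases hk : (k : ℕ) ≤ (qI f g (c ∘ φ) : ℕ) <;>
    by_cases hl : (l : ℕ) ≤ (qI f g (c ∘ φ) : ℕ)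
  · rw [PsiF_eval_le f g c φ hk, PsiF_eval_le f g c φ hl]
    exact phi0_monotone _ (φ.monotone (Fin.mk_le_mk.mpr (by omega)))
  · by_cases hl2 : (l : ℕ) = (qI f g (c ∘ φ) : ℕ) + 1
    · rw [PsiF_eval_le f g c φ hk, PsiF_eval_eq f g c φ hl2]
      by_cases he : ∃ i, Mv f g (c ∘ φ) i
      · rw [if_pos he]
        have hq'mv : Mv f g c (φ (qI f g (c ∘ φ))) := mv_qI f g (c ∘ φ) he
        have h1 : ((φ (qI f g (c ∘ φ))) : ℕ) ≤ (qI f g c : ℕ) :=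
          Fin.le_def.mp (le_qI f g c hq'mv)
        have h2 : ((φ ⟨(k : ℕ), by omega⟩) : ℕ) ≤ ((φ (qI f g (c ∘ φ))) : ℕ) :=
          Fin.le_def.mp (φ.monotone (by simpa [Fin.le_def] using hk))
        rw [phi0_eval_le (le_trans h2 h1)]
        exact Fin.mk_le_mk.mpr (le_trans (le_trans h2 h1) (Nat.le_succ _))
      · rw [if_neg he]
        exact phi0_monotone _ (φ.monotone (by rw [Fin.le_def]; simp [Fin.last]; omega))
    · rw [PsiF_eval_le f g c φ hk, PsiF_eval_gt f g c φ hl hl2]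
      by_cases he : ∃ i, Mv f g (c ∘ φ) i
      · exact phi0_monotone _ (φ.monotone (Fin.mk_le_mk.mpr (by omega)))
      · have := q'_eq_of_not_ex f g c φ he
        omega
  · omega
  · by_cases hk2 : (k : ℕ) = (qI f g (c ∘ φ) : ℕ) + 1
    · by_cases hl2 : (l : ℕ) = (qI f g (c ∘ φ) : ℕ) + 1
      · rw [show k = l from Fin.ext (by omega)]
      · rw [PsiF_eval_eq f g c φ hk2, PsiF_eval_gt f g c φ hl hl2]
        by_cases he : ∃ i, Mv f g (c ∘ φ) i
        · rw [if_pos he]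
          have h3 := gt_q_of_gt_q' f g c φ hc hanti he
            (j := ⟨(l : ℕ) - 1, by omega⟩) (by simp; omega)
          rw [phi0_eval_gt (by simp at h3 ⊢; omega)]
          exact Fin.mk_le_mk.mpr (by simp at h3 ⊢; omega)
        · have := q'_eq_of_not_ex f g c φ he
          omega
    · rw [PsiF_eval_gt f g c φ hk hk2, PsiF_eval_gt f g c φ hl (by omega)]
      exact phi0_monotone _ (φ.monotone (Fin.mk_le_mk.mpr (by omega)))

include hc hanti in
lemma Dch_PsiF (k : Fin (m + 2)) :
    Dch f g c (PsiF f g c φ k) = Dch f g (c ∘ φ) k := by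
  by_cases hk : (k : ℕ) ≤ (qI f g (c ∘ φ) : ℕ)
  · rw [PsiF_eval_le f g c φ hk, Dch_phi0, Dch_eval_le f g (c ∘ φ) hk]
    rfl
  · by_cases hk2 : (k : ℕ) = (qI f g (c ∘ φ) : ℕ) + 1
    · rw [PsiF_eval_eq f g c φ hk2, Dch_eval_eq f g (c ∘ φ) hk2]
      by_cases he : ∃ i, Mv f g (c ∘ φ) i
      · rw [if_pos he]
        have hq'mv : Mv f g c (φ (qI f g (c ∘ φ))) := mv_qI f g (c ∘ φ) he
        rw [Dch_eval_eq f g c (by simp)]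
        have := mv_eq f g c hc hanti (mv_qI f g c ⟨_, hq'mv⟩) hq'mv
        rw [this]
        rfl
      · rw [if_neg he, Dch_phi0]
        have h1 : ¬ Mv f g (c ∘ φ) (Fin.last m) := fun hm => he ⟨_, hm⟩
        have h3 : f ((c ∘ φ) (Fin.last m)) = g ((c ∘ φ) (Fin.last m)) := not_not.mp h1
        have h2 : qI f g (c ∘ φ) = Fin.last m := qI_eq_last f g (c ∘ φ) he
        rw [h2]
        exact h3
    · rw [PsiF_eval_gt f g c φ hk hk2, Dch_phi0, Dch_eval_gt f g (c ∘ φ) hk hk2]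
      rfl

include hc hanti in
lemma PsiF_phi0 (k : Fin (m + 1)) :
    PsiF f g c φ (phi0 (qI f g (c ∘ φ)) k) = phi0 (qI f g c) (φ k) := by
  by_cases hk : (k : ℕ) ≤ (qI f g (c ∘ φ) : ℕ)
  · rw [phi0_eval_le hk, PsiF_eval_le f g c φ (by simpa using hk)]
  · rw [phi0_eval_gt hk, PsiF_eval_gt f g c φ (by simp; omega) (by simp; omega)]
    congr 2

include hc hanti in
lemma PsiF_psi1 (k : Fin (m + 1)) :
    PsiF f g c φ (psi1 f g (c ∘ φ) k) = psi1 f g c (φ k) := by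
  by_cases hk : Mv f g (c ∘ φ) k
  · rw [psi1_eval_pos f g (c ∘ φ) hk, PsiF_eval_eq f g c φ (by simp), if_pos ⟨k, hk⟩,
      psi1_eval_pos f g c (show Mv f g c (φ k) from hk)]
  · rw [psi1_eval_neg f g (c ∘ φ) hk, PsiF_phi0 f g c φ hc hanti,
      psi1_eval_neg f g c (show ¬ Mv f g c (φ k) from hk)]

end Psi

section Topo

open SimplexCategory unitInterval

/-- The topological simplex, as a type. -/
abbrev _root_.SimplexCategory.toTopObj (x : SimplexCategory) : Type :=
  SimplexCategory.toTop.{0}.obj x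

/-- The map of topological simplices. -/
noncomputable def _root_.SimplexCategory.toTopMap {x y : SimplexCategory} (θ : x ⟶ y)
    (u : x.toTopObj) : y.toTopObj :=
  SimplexCategory.toTop.map θ u

lemma _root_.SimplexCategory.toTopObj.ext {x : SimplexCategory} {a b : x.toTopObj}
    (h : (a.down.1 : Fin (x.len + 1) → ℝ) = b.down.1) : a = b :=
  ULift.ext _ _ (Subtype.ext h)

/-- Convex combination in a topological simplex. -/
noncomputable def comb {x : SimplexCategory} (s t : NNReal) (hst : s + t = 1) (a b : x.toTopObj) :
    x.toTopObj :=
  ⟨⟨fun k => (s : ℝ) * a.down.1 k + (t : ℝ) * b.down.1 k, by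
    have h := convex_stdSimplex ℝ (Fin (x.len + 1)) a.down.2 b.down.2
      (NNReal.coe_nonneg s) (NNReal.coe_nonneg t) (by exact_mod_cast hst)
    convert h using 1
    funext k
    simp⟩⟩

lemma toTopMap_comb {x y : SimplexCategory} (θ : x ⟶ y) (s t : NNReal) (hst : s + t = 1)
    (a b : x.toTopObj) :
    toTopMap θ (comb s t hst a b) = comb s t hst (toTopMap θ a) (toTopMap θ b) := by
  apply SimplexCategory.toTopObj.ext
  funext i
  classical
  change FunOnFinite.linearMap ℝ ℝ _ (comb s t hst a b).down.1 i
    = (s : ℝ) * FunOnFinite.linearMap ℝ ℝ _ a.down.1 i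
      + (t : ℝ) * FunOnFinite.linearMap ℝ ℝ _ b.down.1 i
  have hv : ((comb s t hst a b).down.1 : Fin (x.len + 1) → ℝ)
      = (s : ℝ) • (a.down.1 : Fin (x.len + 1) → ℝ) + (t : ℝ) • (b.down.1 : Fin (x.len + 1) → ℝ) := by
    funext k
    simp [comb]
  rw [hv, map_add, map_smul, map_smul]
  rfl

lemma toTopMap_comp {x y z : SimplexCategory} (a : x ⟶ y) (b : y ⟶ z) (u : x.toTopObj) :
    toTopMap (a ≫ b) u = toTopMap b (toTopMap a u) := by
  have h := SimplexCategory.toTop.map_comp a b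
  calc toTopMap (a ≫ b) u = (SimplexCategory.toTop.map (a ≫ b)) u := rfl
    _ = (SimplexCategory.toTop.map a ≫ SimplexCategory.toTop.map b) u := by rw [h]
    _ = toTopMap b (toTopMap a u) := rfl

/-- `1 - t` as a nonnegative real. -/
noncomputable def sg (t : I) : NNReal := Real.toNNReal (1 - (t : ℝ))

/-- `t` as a nonnegative real. -/
noncomputable def tu (t : I) : NNReal := Real.toNNReal (t : ℝ)

lemma sg_add_tu (t : I) : sg t + tu t = 1 := by
  have h1 : (0:ℝ) ≤ (t:ℝ) := t.2.1
  have h2 : (t:ℝ) ≤ 1 := t.2.2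
  apply NNReal.coe_injective
  push_cast [sg, tu]
  rw [Real.coe_toNNReal _ (by linarith), Real.coe_toNNReal _ (by linarith)]
  ring

@[simp] lemma sg_zero : sg 0 = 1 := by simp [sg]
@[simp] lemma tu_zero : tu 0 = 0 := by simp [tu]
@[simp] lemma sg_one : sg 1 = 0 := by simp [sg]
@[simp] lemma tu_one : tu 1 = 1 := by simp [tu]

lemma continuous_sg : Continuous sg :=
  continuous_real_toNNReal.comp (continuous_const.sub continuous_subtype_val)

lemma continuous_tu : Continuous tu :=
  continuous_real_toNNReal.comp continuous_subtype_val

section SimplexLevel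

variable (f g : P →o P)
variable {Δ : SimplexCategoryᵒᵖ} (F : (nerve P).obj Δ)

/-- The underlying chain of a simplex of the nerve. -/
abbrev cOf : Fin (Δ.unop.len + 1) → P := F.obj

variable (hfg : ∀ x, f x ≤ g x)
variable (hanti : ∀ x y : P, x ≤ y → f x ≠ g x → f y ≠ g y → x = y)

/-- The prism chain as a simplex of the nerve. -/
noncomputable def Dsimp :
    (nerve P).obj (Opposite.op (SimplexCategory.mk (Δ.unop.len + 1))) :=
  mkChain (Dch_monotone f g (cOf F) (chain_monotone F) hanti hfg)

/-- The first prism structure morphism. -/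
noncomputable def psi0Hom : Δ.unop ⟶ SimplexCategory.mk (Δ.unop.len + 1) :=
  SimplexCategory.Hom.mk ⟨phi0 (qI f g (cOf F)), phi0_monotone _⟩

/-- The second prism structure morphism. -/
noncomputable def psi1Hom : Δ.unop ⟶ SimplexCategory.mk (Δ.unop.len + 1) :=
  SimplexCategory.Hom.mk ⟨psi1 f g (cOf F), psi1_monotone f g (cOf F) (chain_monotone F) hanti⟩

/-- The weight map of the prism homotopy. -/
noncomputable def wt (u : (Δ.unop).toTopObj) (t : I) :
    (SimplexCategory.mk (Δ.unop.len + 1)).toTopObj :=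
  comb (sg t) (tu t) (sg_add_tu t)
    (toTopMap (psi0Hom f g F) u) (toTopMap (psi1Hom f g F hanti) u)

lemma wt_zero (u : (Δ.unop).toTopObj) :
    wt f g F hanti u 0 = toTopMap (psi0Hom f g F) u := by
  apply SimplexCategory.toTopObj.ext
  funext k
  show (sg 0 : ℝ) * _ + (tu 0 : ℝ) * _ = _
  simp

lemma wt_one (u : (Δ.unop).toTopObj) :
    wt f g F hanti u 1 = toTopMap (psi1Hom f g F hanti) u := by
  apply SimplexCategory.toTopObj.ext
  funext k
  show (sg 1 : ℝ) * _ + (tu 1 : ℝ) * _ = _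
  simp

lemma continuous_wt :
    Continuous (fun p : (Δ.unop).toTopObj × I => wt f g F hanti p.1 p.2) := by
  apply continuous_uliftUp.comp
  apply Continuous.subtype_mk
  apply continuous_pi
  intro k
  apply Continuous.add
  · exact ((NNReal.continuous_coe.comp (continuous_sg.comp continuous_snd)).mul
      (((continuous_apply k).comp (continuous_subtype_val.comp (continuous_uliftDown.comp
        ((SimplexCategory.toTop.map _).hom.continuous.comp continuous_fst))))))
  · exact ((NNReal.continuous_coe.comp (continuous_tu.comp continuous_snd)).mul
      (((continuous_apply k).comp (continuous_subtype_val.comp (continuous_uliftDown.comp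
        ((SimplexCategory.toTop.map _).hom.continuous.comp continuous_fst))))))

/-- The core homotopy on one simplex. -/
noncomputable def hcore :
    C((SimplexCategory.toTop.obj Δ.unop) × I, (SSet.toTop.obj (nerve P) : TopCat)) :=
  ⟨fun p => χ (Dsimp f g F hfg hanti) (wt f g F hanti p.1 p.2),
    (χ (Dsimp f g F hfg hanti)).hom.continuous.comp (continuous_wt f g F hanti)⟩

end SimplexLevel

section ChiLevel

variable (f g : P →o P)
variable (hfg : ∀ x, f x ≤ g x)
variable (hanti : ∀ x y : P, x ≤ y → f x ≠ g x → f y ≠ g y → x = y)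
variable {Δ : SimplexCategoryᵒᵖ} (F : (nerve P).obj Δ)

lemma Dsimp_map_psi0 :
    (nerve P).map (psi0Hom f g F).op (Dsimp f g F hfg hanti) = (nerveMap f).app Δ F := by
  apply functor_ext
  intro i
  rw [nerve_map_obj]
  show Dch f g (cOf F) (phi0 (qI f g (cOf F)) i) = f ((cOf F) i)
  exact Dch_phi0 f g (cOf F) i

lemma Dsimp_map_psi1 :
    (nerve P).map (psi1Hom f g F hanti).op (Dsimp f g F hfg hanti) = (nerveMap g).app Δ F := by
  apply functor_ext
  intro i
  rw [nerve_map_obj]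
  show Dch f g (cOf F) (psi1 f g (cOf F) i) = g ((cOf F) i)
  exact Dch_psi1 f g (cOf F) (chain_monotone F) hanti i

lemma hcore_zero (u : (Δ.unop).toTopObj) :
    (hcore f g F hfg hanti) (u, 0) = χ ((nerveMap f).app Δ F) u := by
  show χ (Dsimp f g F hfg hanti) (wt f g F hanti u 0) = _
  rw [wt_zero, ← Dsimp_map_psi0 f g hfg hanti F, χ_natural]
  rfl

lemma hcore_one (u : (Δ.unop).toTopObj) :
    (hcore f g F hfg hanti) (u, 1) = χ ((nerveMap g).app Δ F) u := by
  show χ (Dsimp f g F hfg hanti) (wt f g F hanti u 1) = _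
  rw [wt_one, ← Dsimp_map_psi1 f g hfg hanti F, χ_natural]
  rfl

variable {Δ' : SimplexCategoryᵒᵖ} (lam : Δ ⟶ Δ')

/-- The connecting morphism between prisms. -/
noncomputable def PsiHom :
    SimplexCategory.mk (Δ'.unop.len + 1) ⟶ SimplexCategory.mk (Δ.unop.len + 1) :=
  SimplexCategory.Hom.mk ⟨PsiF f g (cOf F) lam.unop.toOrderHom,
    PsiF_monotone f g (cOf F) lam.unop.toOrderHom (chain_monotone F) hanti⟩

lemma cOf_map : cOf ((nerve P).map lam F) = cOf F ∘ lam.unop.toOrderHom := by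
  funext i
  exact nerve_map_obj lam.unop F i

lemma Dsimp_map_Psi :
    (nerve P).map (PsiHom f g hanti F lam).op (Dsimp f g F hfg hanti)
      = Dsimp f g ((nerve P).map lam F) hfg hanti := by
  apply functor_ext
  intro i
  rw [nerve_map_obj]
  show Dch f g (cOf F) (PsiF f g (cOf F) lam.unop.toOrderHom i)
      = Dch f g (cOf ((nerve P).map lam F)) i
  rw [cOf_map]
  exact Dch_PsiF f g (cOf F) lam.unop.toOrderHom (chain_monotone F) hanti i

lemma psi0_comp_Psi :
    psi0Hom f g ((nerve P).map lam F) ≫ PsiHom f g hanti F lam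
      = lam.unop ≫ psi0Hom f g F := by
  apply SimplexCategory.Hom.ext
  apply OrderHom.ext
  funext k
  show PsiF f g (cOf F) lam.unop.toOrderHom
      (phi0 (qI f g (cOf ((nerve P).map lam F))) k)
    = phi0 (qI f g (cOf F)) (lam.unop.toOrderHom k)
  rw [cOf_map]
  exact PsiF_phi0 f g (cOf F) lam.unop.toOrderHom (chain_monotone F) hanti k

lemma psi1_comp_Psi :
    psi1Hom f g ((nerve P).map lam F) hanti ≫ PsiHom f g hanti F lam
      = lam.unop ≫ psi1Hom f g F hanti := by
  apply SimplexCategory.Hom.ext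
  apply OrderHom.ext
  funext k
  show PsiF f g (cOf F) lam.unop.toOrderHom
      (psi1 f g (cOf ((nerve P).map lam F)) k)
    = psi1 f g (cOf F) (lam.unop.toOrderHom k)
  rw [cOf_map]
  exact PsiF_psi1 f g (cOf F) lam.unop.toOrderHom (chain_monotone F) hanti k

lemma wt_natural (u : (Δ'.unop).toTopObj) (t : I) :
    SimplexCategory.toTopMap (PsiHom f g hanti F lam)
        (wt f g ((nerve P).map lam F) hanti u t)
      = wt f g F hanti (SimplexCategory.toTopMap lam.unop u) t := by
  rw [wt, toTopMap_comb, ← toTopMap_comp, ← toTopMap_comp,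
    psi0_comp_Psi f g hanti F lam, psi1_comp_Psi f g hanti F lam,
    toTopMap_comp, toTopMap_comp]
  rfl

lemma hcore_natural (u : (Δ'.unop).toTopObj) (t : I) :
    (hcore f g ((nerve P).map lam F) hfg hanti) (u, t)
      = (hcore f g F hfg hanti) (SimplexCategory.toTopMap lam.unop u, t) := by
  show χ (Dsimp f g ((nerve P).map lam F) hfg hanti) (wt f g ((nerve P).map lam F) hanti u t)
      = χ (Dsimp f g F hfg hanti) (wt f g F hanti (SimplexCategory.toTopMap lam.unop u) t)
  rw [← Dsimp_map_Psi f g hfg hanti F lam, χ_natural, ← wt_natural f g hanti F lam]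
  rfl

end ChiLevel

section Assemble

variable (f g : P →o P)
variable (hfg : ∀ x, f x ≤ g x)
variable (hanti : ∀ x y : P, x ≤ y → f x ≠ g x → f y ≠ g y → x = y)

/-- The space of paths in the realization. -/
noncomputable abbrev ZI (P : Type) [PartialOrder P] : TopCat :=
  TopCat.of C(I, (SSet.toTop.obj (nerve P) : TopCat))

/-- The transposed homotopy as a simplicial map. -/
noncomputable def bigG : nerve P ⟶ TopCat.toSSet.obj (ZI P) where
  app Δ := TypeCat.ofHom fun F =>
    ULift.up (TopCat.ofHom (ContinuousMap.curry (hcore f g F hfg hanti)))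
  naturality Δ Δ' lam := by
    ext F
    apply ULift.ext
    apply TopCat.ext
    intro u
    apply ContinuousMap.ext
    intro t
    exact hcore_natural f g hfg hanti F lam u t

/-- Evaluation at `0`/`1`. -/
noncomputable def evI (t : I) : ZI P ⟶ SSet.toTop.obj (nerve P) :=
  TopCat.ofHom ⟨fun (h : C(I, (SSet.toTop.obj (nerve P) : TopCat))) => h t, by
    show Continuous fun (h : C(I, (SSet.toTop.obj (nerve P) : TopCat))) => h t
    exact continuous_eval_const t⟩

/-- The transposed morphism out of the realization. -/
noncomputable def kap : SSet.toTop.obj (nerve P) ⟶ ZI P :=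
  (sSetTopAdj.homEquiv (nerve P) (ZI P)).symm (bigG f g hfg hanti)

lemma kap_ev_zero :
    kap f g hfg hanti ≫ evI (0 : I) = SSet.toTop.map (nerveMap f) := by
  apply hom_ext_chi
  intro Δ F
  rw [← Category.assoc, chi_comp, kap, Equiv.apply_symm_apply, chi_map]
  ext u
  exact hcore_zero f g hfg hanti F u

lemma kap_ev_one :
    kap f g hfg hanti ≫ evI (1 : I) = SSet.toTop.map (nerveMap g) := by
  apply hom_ext_chi
  intro Δ F
  rw [← Category.assoc, chi_comp, kap, Equiv.apply_symm_apply, chi_map]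
  ext u
  exact hcore_one f g hfg hanti F u

include hfg hanti in
/-- The central homotopy lemma (antichain version): if `f ≤ g` pointwise and the set where
they differ is an antichain, the induced maps on the realization of the nerve are homotopic. -/
theorem homotopic_step :
    ContinuousMap.Homotopic
      (SSet.toTop.map (nerveMap f)).hom
      (SSet.toTop.map (nerveMap g)).hom := by
  refine ⟨⟨(ContinuousMap.uncurry (kap f g hfg hanti).hom).comp ContinuousMap.prodSwap, ?_, ?_⟩⟩
  · intro x
    have := congrArg (fun (m : SSet.toTop.obj (nerve P) ⟶ SSet.toTop.obj (nerve P)) => m x)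
      (kap_ev_zero f g hfg hanti)
    exact this
  · intro x
    have := congrArg (fun (m : SSet.toTop.obj (nerve P) ⟶ SSet.toTop.obj (nerve P)) => m x)
      (kap_ev_one f g hfg hanti)
    exact this

end Assemble

end Topo

section General

variable [Finite P]

/-- A strictly monotone rank function on a finite poset. -/
noncomputable def rnk (x : P) : ℕ := Set.ncard {y : P | y < x}

lemma rnk_strictMono {x y : P} (hxy : x < y) : rnk x < rnk y := by
  apply Set.ncard_lt_ncard
  · constructor
    · intro z hz
      exact lt_trans hz hxy
    · intro hsub
      exact lt_irrefl x (hsub hxy)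
  · exact Set.toFinite _

/-- The interpolating sequence between two comparable monotone maps. -/
noncomputable def interp (f g : P →o P) (hfg : ∀ x, f x ≤ g x) (k : ℕ) : P →o P where
  toFun x := if k ≤ rnk x then g x else f x
  monotone' := by
    intro x y hxy
    rcases eq_or_lt_of_le hxy with rfl | hlt
    · exact le_refl _
    · have hr : rnk x < rnk y := rnk_strictMono hlt
      by_cases hx : k ≤ rnk x <;> by_cases hy : k ≤ rnk y <;>
        simp only [if_pos, if_neg, hx, hy, if_true, if_false]
      · exact g.monotone hxy
      · omega
      · exact le_trans (f.monotone hxy) (hfg y)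
      · exact f.monotone hxy

lemma interp_zero (f g : P →o P) (hfg : ∀ x, f x ≤ g x) : interp f g hfg 0 = g := by
  apply OrderHom.ext
  funext x
  show (if 0 ≤ rnk x then g x else f x) = g x
  rw [if_pos (Nat.zero_le _)]

lemma interp_large (f g : P →o P) (hfg : ∀ x, f x ≤ g x) {N : ℕ}
    (hN : ∀ x : P, rnk x < N) : interp f g hfg N = f := by
  apply OrderHom.ext
  funext x
  show (if N ≤ rnk x then g x else f x) = f x
  rw [if_neg (by have := hN x; omega)]

lemma interp_le (f g : P →o P) (hfg : ∀ x, f x ≤ g x) (k : ℕ) (x : P) :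
    interp f g hfg (k + 1) x ≤ interp f g hfg k x := by
  show (if k + 1 ≤ rnk x then g x else f x) ≤ (if k ≤ rnk x then g x else f x)
  by_cases h1 : k + 1 ≤ rnk x
  · rw [if_pos h1, if_pos (by omega)]
  · rw [if_neg h1]
    by_cases h2 : k ≤ rnk x
    · rw [if_pos h2]; exact hfg x
    · rw [if_neg h2]

lemma interp_anti (f g : P →o P) (hfg : ∀ x, f x ≤ g x) (k : ℕ) (x y : P) (hxy : x ≤ y)
    (hx : interp f g hfg (k + 1) x ≠ interp f g hfg k x)
    (hy : interp f g hfg (k + 1) y ≠ interp f g hfg k y) : x = y := by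
  have hrx : rnk x = k := by
    by_contra hne
    apply hx
    show (if k + 1 ≤ rnk x then g x else f x) = (if k ≤ rnk x then g x else f x)
    by_cases h1 : k + 1 ≤ rnk x
    · rw [if_pos h1, if_pos (by omega)]
    · rw [if_neg h1, if_neg (by omega)]
  have hry : rnk y = k := by
    by_contra hne
    apply hy
    show (if k + 1 ≤ rnk y then g y else f y) = (if k ≤ rnk y then g y else f y)
    by_cases h1 : k + 1 ≤ rnk y
    · rw [if_pos h1, if_pos (by omega)]
    · rw [if_neg h1, if_neg (by omega)]
  rcases eq_or_lt_of_le hxy with rfl | hlt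
  · rfl
  · have := rnk_strictMono hlt
    omega

/-- The fundamental homotopy lemma: pointwise comparable monotone self-maps of a finite
poset induce homotopic maps on the geometric realization of the nerve. -/
theorem homotopic_of_le (f g : P →o P) (hfg : ∀ x, f x ≤ g x) :
    ContinuousMap.Homotopic
      (SSet.toTop.map (nerveMap f)).hom
      (SSet.toTop.map (nerveMap g)).hom := by
  obtain ⟨N, hN⟩ : ∃ N : ℕ, ∀ x : P, rnk x < N := by
    cases isEmpty_or_nonempty P with
    | inl h => exact ⟨1, fun x => (h.false x).elim⟩
    | inr h =>
      obtain ⟨M, hM⟩ := Finite.exists_le (fun x : P => rnk x)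
      exact ⟨M + 1, fun x => by have := hM x; omega⟩
  have key : ∀ k : ℕ, ContinuousMap.Homotopic
      (SSet.toTop.map (nerveMap (interp f g hfg k))).hom
      (SSet.toTop.map (nerveMap g)).hom := by
    intro k
    induction k with
    | zero => rw [interp_zero]
    | succ k ih =>
      refine ContinuousMap.Homotopic.trans ?_ ih
      exact homotopic_step (interp f g hfg (k + 1)) (interp f g hfg k)
        (interp_le f g hfg k) (interp_anti f g hfg k)
  have := key N
  rw [interp_large f g hfg hN] at this
  exact this

end General

section IdConst

lemma nerveMap_id : nerveMap (OrderHom.id : P →o P) = 𝟙 (nerve P) := by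
  ext Δ F
  rfl

/-- The unique point of the `0`-simplex. -/
noncomputable def pt0 : (SimplexCategory.mk 0).toTopObj :=
  default

lemma toTopObj_zero_eq (v w : (SimplexCategory.mk 0).toTopObj) : v = w := by
  exact Subsingleton.elim _ _

/-- The collapse morphism to the `0`-simplex. -/
def zeroHom (Δ : SimplexCategoryᵒᵖ) : Δ.unop ⟶ SimplexCategory.mk 0 :=
  SimplexCategory.Hom.mk ⟨fun _ => (0 : Fin 1), monotone_const⟩

/-- The constant chain of length `0`. -/
noncomputable def chain0 (b : P) : (nerve P).obj (Opposite.op (SimplexCategory.mk 0)) :=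
  mkChain (monotone_const (c := b))

/-- The point of the realization corresponding to an element of the poset. -/
noncomputable def ptOf (b : P) : (SSet.toTop.obj (nerve P) : TopCat) :=
  χ (chain0 b) pt0

lemma toTop_nerveMap_const (b : P) :
    SSet.toTop.map (nerveMap (OrderHom.const P b)) =
      TopCat.ofHom (⟨fun _ => ptOf b, continuous_const⟩ :
        C(SSet.toTop.obj (nerve P), SSet.toTop.obj (nerve P))) := by
  apply hom_ext_chi
  intro Δ F
  rw [chi_map]
  have hkey : (nerveMap (OrderHom.const P b)).app Δ F
      = (nerve P).map (zeroHom Δ).op (chain0 b) := by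
    apply functor_ext
    intro i
    rw [nerve_map_obj]
    rfl
  rw [hkey, χ_natural]
  ext u
  show χ (chain0 b) (SimplexCategory.toTopMap _ u) = ptOf b
  rw [toTopObj_zero_eq (SimplexCategory.toTopMap _ u) pt0]
  rfl

end IdConst

section Main

variable (V : Type) [Fintype V] (E : V → V → Prop)

/-- The number of strict descendants of a vertex. -/
noncomputable def rho (v : V) : ℕ := Set.ncard {w | Relation.TransGen E v w}

variable (hacyc : ∀ v, ¬ Relation.TransGen E v v)

include hacyc in
lemma rho_lt {v w : V} (h : E v w) : rho V E w < rho V E v := by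
  apply Set.ncard_lt_ncard
  · constructor
    · intro x hx
      exact Relation.TransGen.head h hx
    · intro hsub
      exact hacyc w (hsub (Relation.TransGen.single h))
  · exact Set.toFinite _

lemma rho_lt_card (v : V) : rho V E v < Fintype.card V + 1 := by
  have h1 : rho V E v ≤ Set.ncard (Set.univ : Set V) :=
    Set.ncard_le_ncard (Set.subset_univ _) (Set.toFinite _)
  rw [Set.ncard_univ, Nat.card_eq_fintype_card] at h1
  omega

/-- The all-`B` labelling. -/
def allB : ProperLabelling V E := ⟨fun _ => Label.B, fun _ _ _ => Or.inr rfl⟩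

/-- Stage `k` of the contraction: all vertices of rank `< k` are labelled `B`. -/
noncomputable def Tmap (k : ℕ) : ProperLabelling V E →o ProperLabelling V E where
  toFun ℓ := ⟨fun v => if rho V E v < k then Label.B else ℓ.1 v, by
    intro v w hvw
    dsimp only
    have hlt := rho_lt V E hacyc hvw
    by_cases hw : rho V E w < k
    · exact Or.inr (if_pos hw)
    · rw [if_neg hw, if_neg (by omega)]
      exact ℓ.2 v w hvw⟩
  monotone' := by
    intro a b hab
    intro v
    dsimp only
    by_cases h : rho V E v < k
    · rw [if_pos h, if_pos h]
      exact Or.inl rfl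
    · rw [if_neg h, if_neg h]
      exact hab v

/-- The intermediate stage: vertices of rank `k` are moved towards `C`. -/
noncomputable def Umap (k : ℕ) : ProperLabelling V E →o ProperLabelling V E where
  toFun ℓ := ⟨fun v => if rho V E v < k then Label.B
      else if rho V E v = k then (if ℓ.1 v = Label.B then Label.B else Label.C)
      else ℓ.1 v, by
    intro v w hvw
    dsimp only
    have hlt := rho_lt V E hacyc hvw
    by_cases hw : rho V E w < k
    · exact Or.inr (if_pos hw)
    · by_cases hw2 : rho V E w = k
      · rw [if_neg (by omega), if_neg (by omega), if_neg hw, if_pos hw2]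
        rcases ℓ.2 v w hvw with h | h
        · exact Or.inl h
        · rw [if_pos h]
          exact Or.inr rfl
      · rw [if_neg hw, if_neg hw2, if_neg (by omega), if_neg (by omega)]
        exact ℓ.2 v w hvw⟩
  monotone' := by
    intro a b hab
    intro v
    dsimp only
    by_cases h : rho V E v < k
    · rw [if_pos h, if_pos h]
      exact Or.inl rfl
    · by_cases h2 : rho V E v = k
      · rw [if_neg h, if_neg h, if_pos h2, if_pos h2]
        rcases hab v with hv | ⟨hv1, hv2⟩
        · rw [hv]
          exact Or.inl rfl
        · rw [hv2]
          by_cases hB : a.1 v = Label.B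
          · rw [if_pos hB, if_neg (show ¬(Label.C = Label.B) by simp)]
            exact Or.inr ⟨by simp, rfl⟩
          · rw [if_neg hB, if_neg (show ¬(Label.C = Label.B) by simp)]
            exact Or.inl rfl
      · rw [if_neg h, if_neg h, if_neg h2, if_neg h2]
        exact hab v

lemma T_le_U (k : ℕ) (ℓ : ProperLabelling V E) :
    Tmap V E hacyc k ℓ ≤ Umap V E hacyc k ℓ := by
  intro v
  show (if rho V E v < k then Label.B else ℓ.1 v) = (if rho V E v < k then Label.B
        else if rho V E v = k then (if ℓ.1 v = Label.B then Label.B else Label.C)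
        else ℓ.1 v)
      ∨ ((if rho V E v < k then Label.B else ℓ.1 v) ≠ Label.C
        ∧ (if rho V E v < k then Label.B
            else if rho V E v = k then (if ℓ.1 v = Label.B then Label.B else Label.C)
            else ℓ.1 v) = Label.C)
  by_cases h : rho V E v < k
  · rw [if_pos h, if_pos h]
    exact Or.inl rfl
  · rw [if_neg h, if_neg h]
    by_cases h2 : rho V E v = k
    · rw [if_pos h2]
      by_cases hB : ℓ.1 v = Label.B
      · rw [if_pos hB]
        exact Or.inl hB
      · rw [if_neg hB]
        by_cases hC : ℓ.1 v = Label.C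
        · exact Or.inl hC
        · exact Or.inr ⟨hC, rfl⟩
    · rw [if_neg h2]
      exact Or.inl rfl

lemma T1_le_U (k : ℕ) (ℓ : ProperLabelling V E) :
    Tmap V E hacyc (k + 1) ℓ ≤ Umap V E hacyc k ℓ := by
  intro v
  show (if rho V E v < k + 1 then Label.B else ℓ.1 v) = (if rho V E v < k then Label.B
        else if rho V E v = k then (if ℓ.1 v = Label.B then Label.B else Label.C)
        else ℓ.1 v)
      ∨ ((if rho V E v < k + 1 then Label.B else ℓ.1 v) ≠ Label.C
        ∧ (if rho V E v < k then Label.B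
            else if rho V E v = k then (if ℓ.1 v = Label.B then Label.B else Label.C)
            else ℓ.1 v) = Label.C)
  by_cases h : rho V E v < k
  · rw [if_pos (by omega : rho V E v < k + 1), if_pos h]
    exact Or.inl rfl
  · rw [if_neg h]
    by_cases h2 : rho V E v = k
    · rw [if_pos (by omega : rho V E v < k + 1), if_pos h2]
      by_cases hB : ℓ.1 v = Label.B
      · rw [if_pos hB]
        exact Or.inl rfl
      · rw [if_neg hB]
        exact Or.inr ⟨by simp, rfl⟩
    · rw [if_neg (by omega : ¬ rho V E v < k + 1), if_neg h2]
      exact Or.inl rfl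

lemma Tmap_zero : Tmap V E hacyc 0 = OrderHom.id := by
  apply OrderHom.ext
  funext ℓ
  apply Subtype.ext
  funext v
  show (if rho V E v < 0 then Label.B else ℓ.1 v) = ℓ.1 v
  rw [if_neg (Nat.not_lt_zero _)]

lemma Tmap_big : Tmap V E hacyc (Fintype.card V + 1) = OrderHom.const _ (allB V E) := by
  apply OrderHom.ext
  funext ℓ
  apply Subtype.ext
  funext v
  show (if rho V E v < Fintype.card V + 1 then Label.B else ℓ.1 v) = Label.B
  rw [if_pos (rho_lt_card V E v)]

end Main

end NerveContract

/-- If a directed graph `G` with finitely many vertices has no cycles, then the geometric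
realization of the nerve of the poset `C(G)` of proper labellings of `G` is contractible. -/
theorem contractible_nerve_properLabellings
    (V : Type) [Fintype V] (E : V → V → Prop)
    (hacyc : ∀ v, ¬ Relation.TransGen E v v) :
    ContractibleSpace (SSet.toTop.obj (nerve (ProperLabelling V E))) := by
  haveI : Finite (ProperLabelling V E) := by
    unfold ProperLabelling
    exact Subtype.finite
  rw [contractible_iff_id_nullhomotopic]
  have key : ∀ k : ℕ, ContinuousMap.Homotopic
      (SSet.toTop.map (NerveContract.nerveMap (OrderHom.id : ProperLabelling V E →o _))).hom
      (SSet.toTop.map (NerveContract.nerveMap (NerveContract.Tmap V E hacyc k))).hom := by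
    intro k
    induction k with
    | zero =>
      rw [NerveContract.Tmap_zero]
    | succ k ih =>
      refine ContinuousMap.Homotopic.trans ih ?_
      refine ContinuousMap.Homotopic.trans
        (NerveContract.homotopic_of_le (NerveContract.Tmap V E hacyc k)
          (NerveContract.Umap V E hacyc k) (NerveContract.T_le_U V E hacyc k)) ?_
      exact (NerveContract.homotopic_of_le (NerveContract.Tmap V E hacyc (k + 1))
        (NerveContract.Umap V E hacyc k) (NerveContract.T1_le_U V E hacyc k)).symm
  have h1 := key (Fintype.card V + 1)
  rw [NerveContract.Tmap_big, NerveContract.toTop_nerveMap_const] at h1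
  have hid : (SSet.toTop.map (NerveContract.nerveMap
      (OrderHom.id : ProperLabelling V E →o _))).hom
      = ContinuousMap.id _ := by
    rw [NerveContract.nerveMap_id, CategoryTheory.Functor.map_id]
    rfl
  rw [hid] at h1
  exact ⟨NerveContract.ptOf (NerveContract.allB V E), h1⟩
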